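/- There exist minimized DFAs D and D' with isomorphic infinite parts whose languages are not finitely different. Concretely, the minimal DFAs for the languages 0* and 10* over alphabet {0,1} have isomorphic infinite parts, but 0* △ 10* is infinite. -/

import Mathlib

open Set

/-- Symmetric difference of two languages, as a set of words. -/
def symmDiffL {α : Type} (L L' : Language α) : Set (List α) :=
  {w | (w ∈ L ∧ w ∉ L') ∨ (w ∈ L' ∧ w ∉ L)}

/-- Two languages are finitely different if their symmetric difference is finite. -/
def FinDiff {α : Type} (L L' : Language α) : Prop := (symmDiffL L L').Finite

/-- The set of words that drive the DFA from its start state to state `q`. -/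
def DFA.reachedBy {α σ : Type} (D : DFA α σ) (q : σ) : Set (List α) :=
  {w | D.eval w = q}

/-- The infinite part of a DFA: states reached by infinitely many words. -/
def DFA.infinitePart {α σ : Type} (D : DFA α σ) : Set σ :=
  {q | (D.reachedBy q).Infinite}

/-- The finite part of a DFA: states reached by only finitely many words. -/
def DFA.finitePart {α σ : Type} (D : DFA α σ) : Set σ :=
  {q | (D.reachedBy q).Finite}

/-- The language induced by state `q` of DFA `D`. -/
def DFA.langOf {α σ : Type} (D : DFA α σ) (q : σ) : Language α :=
  {w | D.evalFrom q w ∈ D.accept}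

/-- A DFA is minimized if all states are reachable and distinct states
induce distinct languages. -/
def DFA.Minimized {α σ : Type} (D : DFA α σ) : Prop :=
  (∀ q, ∃ w, D.eval w = q) ∧ ∀ p q : σ, D.langOf p = D.langOf q → p = q

/-- Two DFAs have isomorphic infinite parts. -/
def InfIso {α σ σ' : Type} (D : DFA α σ) (D' : DFA α σ') : Prop :=
  ∃ f : σ → σ', Set.BijOn f D.infinitePart D'.infinitePart ∧
    (∀ q ∈ D.infinitePart, q ∈ D.accept ↔ f q ∈ D'.accept) ∧
    (∀ q ∈ D.infinitePart, ∀ c : α, f (D.step q c) = D'.step (f q) c)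

/-- `S(D)`: the set of finite-difference classes of languages induced by states of `D`,
each class represented as the set of languages finitely different from the inducing one. -/
def SClasses {α σ : Type} (D : DFA α σ) : Set (Set (Language α)) :=
  {C | ∃ q : σ, C = {L | FinDiff (D.langOf q) L}}

/-- A DFA is f-minimal if no DFA recognizing a finitely different language has
fewer states. -/
def FMinimal {α σ : Type} [Fintype σ] (D : DFA α σ) : Prop :=
  ∀ (σ' : Type) (_ : Fintype σ') (D' : DFA α σ'),
    FinDiff D.accepts D'.accepts → Fintype.card σ ≤ Fintype.card σ'

def DZ : DFA (Fin 2) (Fin 2) where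
  step := fun q c => if q = 0 ∧ c = 0 then 0 else 1
  start := 0
  accept := {0}

def DO : DFA (Fin 2) (Fin 3) where
  step := fun q c =>
    if q = 0 then (if c = 1 then 1 else 2)
    else if q = 1 then (if c = 0 then 1 else 2)
    else 2
  start := 0
  accept := {1}

lemma fin2cases (c : Fin 2) : c = 0 ∨ c = 1 := by fin_cases c <;> simp

lemma DZ_dead (w : List (Fin 2)) : DZ.evalFrom 1 w = 1 := by
  induction w with
  | nil => rfl
  | cons c t ih =>
    have h : DZ.evalFrom 1 (c :: t) = DZ.evalFrom (DZ.step 1 c) t := rfl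
    have h2 : DZ.step 1 c = 1 := by simp [DZ]
    rw [h, h2, ih]

lemma DZ_eval0 (w : List (Fin 2)) : DZ.evalFrom 0 w = 0 ↔ ∀ c ∈ w, c = 0 := by
  induction w with
  | nil => simp [DFA.evalFrom]
  | cons c t ih =>
    rcases fin2cases c with rfl | rfl
    · have h : DZ.evalFrom 0 (0 :: t) = DZ.evalFrom 0 t := rfl
      rw [h]; simp [ih]
    · have h : DZ.evalFrom 0 (1 :: t) = DZ.evalFrom 1 t := rfl
      rw [h, DZ_dead]; simp

lemma DO_dead (w : List (Fin 2)) : DO.evalFrom 2 w = 2 := by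
  induction w with
  | nil => rfl
  | cons c t ih =>
    have h : DO.evalFrom 2 (c :: t) = DO.evalFrom (DO.step 2 c) t := rfl
    have h2 : DO.step 2 c = 2 := by simp [DO]
    rw [h, h2, ih]

lemma DO_eval1 (w : List (Fin 2)) : DO.evalFrom 1 w = 1 ↔ ∀ c ∈ w, c = 0 := by
  induction w with
  | nil => simp [DFA.evalFrom]
  | cons c t ih =>
    rcases fin2cases c with rfl | rfl
    · have h : DO.evalFrom 1 (0 :: t) = DO.evalFrom 1 t := rfl
      rw [h]; simp [ih]
    · have h : DO.evalFrom 1 (1 :: t) = DO.evalFrom 2 t := rfl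
      rw [h, DO_dead]; simp

lemma DO_ne0 (w : List (Fin 2)) (q : Fin 3) (hq : q ≠ 0) : DO.evalFrom q w ≠ 0 := by
  induction w generalizing q with
  | nil => simpa [DFA.evalFrom]
  | cons c t ih =>
    have h : DO.evalFrom q (c :: t) = DO.evalFrom (DO.step q c) t := rfl
    rw [h]
    apply ih
    fin_cases q <;> fin_cases c <;> simp_all [DO]

lemma DZ_accepts : DZ.accepts = {w : List (Fin 2) | ∀ c ∈ w, c = 0} := by
  ext w
  show DZ.evalFrom DZ.start w ∈ DZ.accept ↔ _
  have hs : DZ.start = 0 := rfl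
  have ha : DZ.accept = {0} := rfl
  rw [hs, ha]
  exact Set.mem_singleton_iff.trans (DZ_eval0 w)

lemma DO_accepts : DO.accepts = {w : List (Fin 2) | ∃ t, w = 1 :: t ∧ ∀ c ∈ t, c = 0} := by
  ext w
  show DO.evalFrom DO.start w ∈ DO.accept ↔ _
  have ha : DO.accept = {1} := rfl
  rw [ha]
  simp only [Set.mem_singleton_iff, Set.mem_setOf_eq]
  match w with
  | [] =>
    constructor
    · intro h; exact absurd h (by decide)
    · rintro ⟨t, ht, -⟩; exact absurd ht (by simp)
  | c :: t =>
    rcases fin2cases c with rfl | rfl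
    · have h : DO.evalFrom DO.start (0 :: t) = DO.evalFrom 2 t := rfl
      rw [h, DO_dead]
      constructor
      · intro h; exact absurd h (by decide)
      · rintro ⟨t', ht', -⟩; simp at ht'
    · have h : DO.evalFrom DO.start (1 :: t) = DO.evalFrom 1 t := rfl
      rw [h]
      rw [DO_eval1]
      constructor
      · intro h; exact ⟨t, rfl, h⟩
      · rintro ⟨t', ht', hall⟩
        simp at ht'
        subst ht'
        exact hall

lemma DZ_inf : DZ.infinitePart = Set.univ := by
  ext q
  simp only [DFA.infinitePart, Set.mem_setOf_eq, Set.mem_univ, iff_true]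
  rcases fin2cases q with rfl | rfl
  · apply Set.infinite_of_injective_forall_mem
      (f := fun n : ℕ => List.replicate n (0 : Fin 2))
    · intro a b h; simpa using congrArg List.length h
    · intro n
      show DZ.eval _ = 0
      exact (DZ_eval0 _).mpr (fun c hc => List.eq_of_mem_replicate hc)
  · apply Set.infinite_of_injective_forall_mem
      (f := fun n : ℕ => (1 : Fin 2) :: List.replicate n (0 : Fin 2))
    · intro a b h; simpa using congrArg List.length h
    · intro n
      show DZ.eval _ = 1
      have h : DZ.eval (1 :: List.replicate n 0) = DZ.evalFrom 1 (List.replicate n 0) := rfl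
      rw [h, DZ_dead]

lemma DO_reached0 : DO.reachedBy 0 ⊆ {[]} := by
  intro w hw
  match w with
  | [] => rfl
  | c :: t =>
    exfalso
    have h : DO.eval (c :: t) = DO.evalFrom (DO.step 0 c) t := rfl
    have hne : DO.step 0 c ≠ 0 := by rcases fin2cases c with rfl | rfl <;> decide
    exact DO_ne0 t _ hne (h ▸ hw)

lemma DO_inf : DO.infinitePart = {1, 2} := by
  ext q
  simp only [DFA.infinitePart, Set.mem_setOf_eq, Set.mem_insert_iff, Set.mem_singleton_iff]
  constructor
  · intro h
    by_contra hq
    push_neg at hq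
    have hq0 : q = 0 := by fin_cases q <;> simp_all
    subst hq0
    exact h ((Set.finite_singleton ([] : List (Fin 2))).subset DO_reached0)
  · rintro (rfl | rfl)
    · apply Set.infinite_of_injective_forall_mem
        (f := fun n : ℕ => (1 : Fin 2) :: List.replicate n (0 : Fin 2))
      · intro a b h; simpa using congrArg List.length h
      · intro n
        show DO.eval _ = 1
        have h : DO.eval (1 :: List.replicate n 0) = DO.evalFrom 1 (List.replicate n 0) := rfl
        rw [h]
        exact (DO_eval1 _).mpr (fun c hc => List.eq_of_mem_replicate hc)
    · apply Set.infinite_of_injective_forall_mem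
        (f := fun n : ℕ => (0 : Fin 2) :: List.replicate n (0 : Fin 2))
      · intro a b h; simpa using congrArg List.length h
      · intro n
        show DO.eval _ = 2
        have h : DO.eval (0 :: List.replicate n 0) = DO.evalFrom 2 (List.replicate n 0) := rfl
        rw [h, DO_dead]

lemma DZ_min : DZ.Minimized := by
  constructor
  · intro q
    rcases fin2cases q with rfl | rfl
    · exact ⟨[], rfl⟩
    · exact ⟨[1], by decide⟩
  · intro p q h
    fin_cases p <;> fin_cases q <;> first
      | rfl
      | (exfalso
         have := Set.ext_iff.mp h []
         simp [DFA.langOf, DFA.evalFrom, DZ] at this)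

lemma DO_min : DO.Minimized := by
  constructor
  · intro q
    fin_cases q
    · exact ⟨[], rfl⟩
    · exact ⟨[1], by decide⟩
    · exact ⟨[0], by decide⟩
  · intro p q h
    fin_cases p <;> fin_cases q <;> first
      | rfl
      | (exfalso
         have h1 := Set.ext_iff.mp h []
         have h2 := Set.ext_iff.mp h [1]
         simp [DFA.langOf, DFA.evalFrom, DO] at h1 h2)


/-- The converse of the infinite part isomorphism theorem fails:
the minimal DFAs of `0*` and `10*` have isomorphic infinite parts but their
languages are not finitely different. -/
theorem infIso_not_finDiff :
    ∃ (σ σ' : Type) (_ : Fintype σ) (_ : Fintype σ')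
      (D : DFA (Fin 2) σ) (D' : DFA (Fin 2) σ'),
      D.Minimized ∧ D'.Minimized ∧
      D.accepts = {w : List (Fin 2) | ∀ c ∈ w, c = 0} ∧
      D'.accepts = {w : List (Fin 2) | ∃ t, w = 1 :: t ∧ ∀ c ∈ t, c = 0} ∧
      InfIso D D' ∧ ¬ FinDiff D.accepts D'.accepts := by
  refine ⟨Fin 2, Fin 3, inferInstance, inferInstance, DZ, DO,
    DZ_min, DO_min, DZ_accepts, DO_accepts, ?_, ?_⟩
  · refine ⟨fun q => if q = 0 then 1 else 2, ?_, ?_, ?_⟩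
    · rw [DZ_inf, DO_inf]
      refine ⟨?_, ?_, ?_⟩
      · intro q _; rcases fin2cases q with rfl | rfl <;> simp
      · intro a _ b _ hab
        rcases fin2cases a with rfl | rfl <;> rcases fin2cases b with rfl | rfl <;>
          simp_all
      · intro y hy
        rcases hy with rfl | hy
        · exact ⟨0, Set.mem_univ _, by simp⟩
        · rw [Set.mem_singleton_iff] at hy; subst hy
          exact ⟨1, Set.mem_univ _, by simp⟩
    · intro q _
      rcases fin2cases q with rfl | rfl <;> simp [DZ, DO]
    · intro q _ c
      fin_cases q <;> fin_cases c <;> decide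
  · intro hfin
    have hinf : (symmDiffL DZ.accepts DO.accepts).Infinite := by
      apply Set.infinite_of_injective_forall_mem
        (f := fun n : ℕ => List.replicate n (0 : Fin 2))
      · intro a b h; simpa using congrArg List.length h
      · intro n
        left
        rw [DZ_accepts, DO_accepts]
        constructor
        · exact fun c hc => List.eq_of_mem_replicate hc
        · rintro ⟨t, ht, -⟩
          cases n with
          | zero => simp at ht
          | succ m => rw [List.replicate_succ] at ht; simp at ht
    exact hinf hfin
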